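/- Let p be a prime, R a commutative ring equipped with a p-derivation δ with associated Frobenius lift φ, and m ≥ 0 an integer. Then there exists a ring homomorphism t̃F : 𝕎(R) → 𝕎(R) of the ring of p-typical Witt vectors such that: (i) w_k(t̃F(x)) = φ(w_k(x)) for all 0 ≤ k ≤ m and all x ∈ 𝕎(R); (ii) w_k(t̃F(x)) = w_{k+1}(x) for all k ≥ m+1 and all x ∈ 𝕎(R); and (iii) for every h ≥ 0 and every x ∈ 𝕎(R), the h-th Witt coefficient of t̃F(x) is congruent to the p-th power of the h-th Witt coefficient of x modulo p, i.e. (t̃F(x))_h − (x_h)^p ∈ pR. -/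

import Mathlib

open MvPolynomial WittVector

open Finset

set_option linter.unusedSectionVars false
set_option linter.unusedTactic false

/-- A `p`-derivation on a commutative ring `B`, relative to the polynomial
`Cp ∈ ℤ[X,Y]` satisfying `p·Cp = X^p + Y^p - (X+Y)^p`. -/
def IsPDeriv (p : ℕ) {B : Type*} [CommRing B] (Cp : MvPolynomial (Fin 2) ℤ)
    (δ : B → B) : Prop :=
  δ 1 = 0 ∧
  (∀ x y : B, δ (x + y) = δ x + δ y + MvPolynomial.aeval ![x, y] Cp) ∧
  (∀ x y : B, δ (x * y) = x ^ p * δ y + y ^ p * δ x + (p : B) * δ x * δ y)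

namespace LatFrobAux

variable (p : ℕ) [hp : Fact p.Prime]
  (Cp : MvPolynomial (Fin 2) ℤ)
  (hCp : (p : MvPolynomial (Fin 2) ℤ) * Cp = X 0 ^ p + X 1 ^ p - (X 0 + X 1) ^ p)



abbrev A : Type := MvPolynomial (Fin 2 × ℕ × ℕ) ℤ

/-- successor on variable indices -/
def nx (v : Fin 2 × ℕ × ℕ) : Fin 2 × ℕ × ℕ := (v.1, v.2.1, v.2.2 + 1)

/-- the Frobenius lift on `A` -/
noncomputable def Phi : A →+* A :=
  ((aeval fun v : Fin 2 × ℕ × ℕ => X v ^ p + (p : A) * X (nx v)) : A →ₐ[ℤ] A).toRingHom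

lemma Phi_X (v : Fin 2 × ℕ × ℕ) : Phi p (X v) = X v ^ p + (p : A) * X (nx v) := by
  simp [Phi]

lemma pA_ne_zero : (p : A) ≠ 0 := by
  rw [← map_natCast (C : ℤ →+* A) p]
  simp only [ne_eq, MvPolynomial.C_eq_zero]
  exact_mod_cast hp.out.ne_zero

lemma pcancel {k : ℕ} {u v : A} (h : (p : A) ^ k * u = (p : A) ^ k * v) : u = v :=
  mul_left_cancel₀ (pow_ne_zero _ (pA_ne_zero p)) h

lemma frobLift (a : A) : ∃ c : A, Phi p a - a ^ p = (p : A) * c := by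
  classical
  set π : A →+* MvPolynomial (Fin 2 × ℕ × ℕ) (ZMod p) :=
    (MvPolynomial.map (Int.castRingHom (ZMod p))) with hπdef
  have hker : ∀ b : A, π b = 0 → ∃ c, b = (p : A) * c := by
    intro b hb
    have hd : C ((p : ℤ)) ∣ b := by
      rw [MvPolynomial.C_dvd_iff_dvd_coeff]
      intro i
      have : (π b).coeff i = 0 := by rw [hb]; simp
      rw [hπdef, MvPolynomial.coeff_map] at this
      exact_mod_cast (ZMod.intCast_zmod_eq_zero_iff_dvd _ p).1 this
    obtain ⟨c, hc⟩ := hd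
    refine ⟨c, ?_⟩
    rw [hc, map_natCast (C : ℤ →+* A) p]
  have hcharp : CharP (MvPolynomial (Fin 2 × ℕ × ℕ) (ZMod p)) p := inferInstance
  have key : π.comp (Phi p) =
      (frobenius (MvPolynomial (Fin 2 × ℕ × ℕ) (ZMod p)) p).comp π := by
    apply MvPolynomial.ringHom_ext
    · intro r
      simp only [RingHom.comp_apply]
      rw [show (Phi p) (C r) = C r by simp [Phi]]
      simp only [hπdef, MvPolynomial.map_C, frobenius_def]
      rw [← map_pow, ZMod.pow_card]
    · intro v
      simp only [RingHom.comp_apply, Phi_X, frobenius_def]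
      simp [hπdef, CharP.cast_eq_zero]
  have : π (Phi p a - a ^ p) = 0 := by
    have h1 : π (Phi p a) = (π a) ^ p := by
      have := RingHom.congr_fun key a
      simpa [frobenius_def] using this
    simp [map_sub, h1, map_pow]
  exact hker _ this

/-- the p-derivation on `A` -/
noncomputable def dA (a : A) : A := (frobLift p a).choose

lemma dA_spec (a : A) : Phi p a - a ^ p = (p : A) * dA p a := (frobLift p a).choose_spec

lemma Phi_eq (a : A) : Phi p a = a ^ p + (p : A) * dA p a := by
  have := dA_spec p a; linear_combination this

lemma dA_X (v : Fin 2 × ℕ × ℕ) : dA p (X v) = X (nx v) := by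
  apply pcancel p (k := 1)
  rw [pow_one]
  have := dA_spec p (X v)
  rw [Phi_X] at this
  linear_combination -this

lemma dA_one : dA p 1 = 0 := by
  apply pcancel p (k := 1)
  rw [pow_one]
  have := dA_spec p 1
  simp only [map_one, one_pow, sub_self] at this
  linear_combination -this


section PD

variable {S : Type*} [CommRing S]

include hCp

lemma p_mul_Cp (x y : S) :
    (p : S) * (aeval ![x, y] Cp) = x ^ p + y ^ p - (x + y) ^ p := by
  have := congrArg (aeval ![x, y]) hCp
  simpa using this

lemma Cp_zero_zero : (aeval ![(0 : S), 0] Cp) = 0 := by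
  have h0 : MvPolynomial.constantCoeff Cp = 0 := by
    have := congrArg MvPolynomial.constantCoeff hCp
    simp only [map_mul, map_sub, map_add, map_pow, constantCoeff_X, map_natCast] at this
    rw [zero_pow hp.out.ne_zero, add_zero, zero_pow hp.out.ne_zero] at this
    have hp0 : ((p : ℤ)) ≠ 0 := by exact_mod_cast hp.out.ne_zero
    exact (mul_eq_zero.1 this).resolve_left hp0
  have he : (![(0 : S), 0]) = (fun _ => 0) := by
    funext i; fin_cases i <;> rfl
  rw [he, aeval_zero', h0, map_zero]

variable (δS : S → S) (hδS : IsPDeriv p Cp δS)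

include hδS

lemma pd_zero : δS 0 = 0 := by
  have := hδS.2.1 0 0
  rw [add_zero, Cp_zero_zero p Cp hCp] at this
  linear_combination -this

lemma pd_neg (x : S) : δS (-x) = -δS x - aeval ![x, -x] Cp := by
  have := hδS.2.1 x (-x)
  rw [add_neg_cancel, pd_zero p Cp hCp δS hδS] at this
  linear_combination -this

/-- the Frobenius lift attached to a p-derivation, as a ring hom -/
noncomputable def phiHom : S →+* S where
  toFun x := x ^ p + (p : S) * δS x
  map_one' := by simp [hδS.1]
  map_zero' := by simp [pd_zero p Cp hCp δS hδS, zero_pow hp.out.ne_zero]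
  map_add' x y := by
    have h := hδS.2.1 x y
    have h2 := p_mul_Cp p Cp hCp x y
    linear_combination (p : S) * h + h2
  map_mul' x y := by
    have h := hδS.2.2 x y
    linear_combination (p : S) * h

lemma phiHom_apply (x : S) : phiHom p Cp hCp δS hδS x = x ^ p + (p : S) * δS x := rfl

end PD


include hCp in
lemma isPDeriv_dA : IsPDeriv p Cp (dA p) := by
  refine ⟨dA_one p, ?_, ?_⟩
  · intro x y
    apply pcancel p (k := 1)
    rw [pow_one]
    have hxy := dA_spec p (x + y)
    have hx := dA_spec p x
    have hy := dA_spec p y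
    have hm : Phi p (x + y) = Phi p x + Phi p y := map_add _ _ _
    have h2 := p_mul_Cp p Cp hCp x y
    linear_combination -hxy + hx + hy + hm - h2
  · intro x y
    apply pcancel p (k := 1)
    rw [pow_one]
    have hxy := dA_spec p (x * y)
    have hx := dA_spec p x
    have hy := dA_spec p y
    have hm : Phi p (x * y) = Phi p x * Phi p y := map_mul _ _ _
    linear_combination -hxy + hm + Phi p y * hx + (y ^ p + (p : A) * dA p y) * hy * 0
      + (x ^ p + (p : A) * dA p x) * hy

section Dwork

variable (m : ℕ)

/-- the universal Witt coordinates -/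
noncomputable def xc (i : ℕ) : A := X ((0 : Fin 2), i, 0)

/-- ghost sums -/
noncomputable def gw (c : ℕ → A) (n : ℕ) : A :=
  ∑ i ∈ range (n + 1), (p : A) ^ i * c i ^ p ^ (n - i)

/-- the ghost targets of the shifted lateral Frobenius -/
noncomputable def tgt (k : ℕ) : A :=
  if k ≤ m then Phi p (gw p xc k) else gw p xc (k + 1)

lemma gw_succ_congr (c : ℕ → A) (n : ℕ) :
    (p : A) ^ (n + 1) ∣ gw p c (n + 1) - Phi p (gw p c n) := by
  have hPhi : Phi p (gw p c n) =
      ∑ i ∈ range (n + 1), (p : A) ^ i * (Phi p (c i)) ^ p ^ (n - i) := by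
    rw [gw, map_sum]
    exact Finset.sum_congr rfl fun i _ => by rw [map_mul, map_pow, map_pow, map_natCast]
  have hkey : gw p c (n + 1) - Phi p (gw p c n) =
      (∑ i ∈ range (n + 1),
        ((p : A) ^ i * c i ^ p ^ (n + 1 - i) - (p : A) ^ i * (Phi p (c i)) ^ p ^ (n - i)))
      + (p : A) ^ (n + 1) * c (n + 1) ^ p ^ (n + 1 - (n + 1)) := by
    rw [hPhi, gw, Finset.sum_range_succ, Finset.sum_sub_distrib]
    ring
  rw [hkey]
  refine dvd_add (Finset.dvd_sum ?_) (Dvd.intro _ rfl)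
  intro i hi
  rw [Finset.mem_range] at hi
  have h1 : (p : A) ∣ c i ^ p - Phi p (c i) :=
    ⟨-(dA p (c i)), by linear_combination -(dA_spec p (c i))⟩
  have h2 : (p : A) ^ (n - i + 1) ∣ (c i ^ p) ^ p ^ (n - i) - (Phi p (c i)) ^ p ^ (n - i) := by
    have := dvd_sub_pow_of_dvd_sub h1 (n - i)
    push_cast at this
    exact this
  have h3 : c i ^ p ^ (n + 1 - i) = (c i ^ p) ^ p ^ (n - i) := by
    rw [← pow_mul]
    congr 1
    rw [← pow_succ']
    congr 1
    omega
  rw [h3, ← mul_sub]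
  have h4 : (p : A) ^ (n + 1) = (p : A) ^ i * (p : A) ^ (n - i + 1) := by
    rw [← pow_add]
    congr 1
    omega
  rw [h4]
  exact mul_dvd_mul_left _ h2

lemma tgt_congr (k : ℕ) : (p : A) ^ (k + 1) ∣ tgt p m (k + 1) - Phi p (tgt p m k) := by
  by_cases h1 : k + 1 ≤ m
  · rw [tgt, tgt, if_pos h1, if_pos (le_trans (Nat.le_succ k) h1)]
    have := map_dvd (Phi p) (gw_succ_congr p xc k)
    rw [map_sub, map_pow, map_natCast] at this
    exact this
  · by_cases h2 : k ≤ m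
    · rw [tgt, tgt, if_neg h1, if_pos h2]
      have ha := gw_succ_congr p xc (k + 1)
      have hb := map_dvd (Phi p) (gw_succ_congr p xc k)
      rw [map_sub, map_pow, map_natCast] at hb
      have ha' : (p : A) ^ (k + 1) ∣ gw p xc (k + 1 + 1) - Phi p (gw p xc (k + 1)) :=
        dvd_trans (pow_dvd_pow _ (by omega)) ha
      have hkey : gw p xc (k + 1 + 1) - Phi p (Phi p (gw p xc k)) =
          (gw p xc (k + 1 + 1) - Phi p (gw p xc (k + 1)))
          + (Phi p (gw p xc (k + 1)) - Phi p (Phi p (gw p xc k))) := by ring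
      rw [hkey]
      exact dvd_add ha' hb
    · rw [tgt, tgt, if_neg h1, if_neg h2]
      exact dvd_trans (pow_dvd_pow _ (by omega)) (gw_succ_congr p xc (k + 1))

lemma gw_congr (a b : ℕ → A) (n : ℕ) (h : ∀ i ≤ n, a i = b i) : gw p a n = gw p b n :=
  Finset.sum_congr rfl fun i hi => by
    rw [h i (by rw [Finset.mem_range] at hi; omega)]

lemma exists_upto (n : ℕ) : ∃ a : ℕ → A, ∀ h ≤ n, gw p a h = tgt p m h := by
  induction n with
  | zero =>
    refine ⟨fun _ => tgt p m 0, fun h hh => ?_⟩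
    interval_cases h
    simp [gw]
  | succ n ih =>
    obtain ⟨a, ha⟩ := ih
    have hstep : (p : A) ^ (n + 1) ∣
        tgt p m (n + 1) - ∑ i ∈ range (n + 1), (p : A) ^ i * a i ^ p ^ (n + 1 - i) := by
      have h1 := tgt_congr p m n
      have h2 : (p : A) ^ (n + 1) ∣
          (∑ i ∈ range (n + 1), (p : A) ^ i * a i ^ p ^ (n + 1 - i)) - Phi p (gw p a n) := by
        have h3 := gw_succ_congr p a n
        have hsp : gw p a (n + 1) =
            (∑ i ∈ range (n + 1), (p : A) ^ i * a i ^ p ^ (n + 1 - i))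
            + (p : A) ^ (n + 1) * a (n + 1) ^ p ^ (n + 1 - (n + 1)) :=
          Finset.sum_range_succ _ _
        have h4 : (∑ i ∈ range (n + 1), (p : A) ^ i * a i ^ p ^ (n + 1 - i)) - Phi p (gw p a n)
            = (gw p a (n + 1) - Phi p (gw p a n))
              - (p : A) ^ (n + 1) * a (n + 1) ^ p ^ (n + 1 - (n + 1)) := by
          rw [hsp]; ring
        rw [h4]
        exact dvd_sub h3 (Dvd.intro _ rfl)
      have hPG : Phi p (gw p a n) = Phi p (tgt p m n) := by rw [ha n le_rfl]
      have h5 : tgt p m (n + 1) - ∑ i ∈ range (n + 1), (p : A) ^ i * a i ^ p ^ (n + 1 - i)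
          = (tgt p m (n + 1) - Phi p (tgt p m n))
            - ((∑ i ∈ range (n + 1), (p : A) ^ i * a i ^ p ^ (n + 1 - i)) - Phi p (gw p a n)) := by
        rw [hPG]; ring
      rw [h5]
      exact dvd_sub h1 h2
    obtain ⟨b, hb⟩ := hstep
    refine ⟨Function.update a (n + 1) b, fun h hh => ?_⟩
    have hco : ∀ i ≤ n, Function.update a (n + 1) b i = a i := fun i hi =>
      Function.update_of_ne (by omega) _ _
    rcases Nat.lt_or_ge h (n + 1) with hlt | hge
    · rw [gw_congr p _ a h (fun i hi => hco i (by omega))]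
      exact ha h (by omega)
    · have heq : h = n + 1 := by omega
      subst heq
      rw [gw, Finset.sum_range_succ, Function.update_self]
      have h6 : ∑ i ∈ range (n + 1), (p : A) ^ i * (Function.update a (n + 1) b i) ^ p ^ (n + 1 - i)
          = ∑ i ∈ range (n + 1), (p : A) ^ i * a i ^ p ^ (n + 1 - i) :=
        Finset.sum_congr rfl fun i hi => by
          rw [hco i (by rw [Finset.mem_range] at hi; omega)]
      rw [h6, Nat.sub_self, pow_zero, pow_one]
      linear_combination -hb

lemma upto_unique (a b : ℕ → A) (n : ℕ) (ha : ∀ h ≤ n, gw p a h = tgt p m h)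
    (hb : ∀ h ≤ n, gw p b h = tgt p m h) : ∀ i ≤ n, a i = b i := by
  intro i
  induction i using Nat.strong_induction_on with
  | _ i ih =>
    intro hi
    have h1 : gw p a i = gw p b i := by rw [ha i hi, hb i hi]
    rw [gw, gw, Finset.sum_range_succ, Finset.sum_range_succ] at h1
    have h2 : ∑ j ∈ range i, (p : A) ^ j * a j ^ p ^ (i - j)
        = ∑ j ∈ range i, (p : A) ^ j * b j ^ p ^ (i - j) :=
      Finset.sum_congr rfl fun j hj => by
        rw [ih j (Finset.mem_range.1 hj) (by have := Finset.mem_range.1 hj; omega)]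
    rw [h2] at h1
    have h3 : (p : A) ^ i * a i = (p : A) ^ i * b i := by
      have h4 := h1
      rw [Nat.sub_self, pow_zero, pow_one, pow_one] at h4
      linear_combination h4
    exact pcancel p h3

/-- the universal Witt coefficients of the shifted lateral Frobenius -/
noncomputable def aseq (h : ℕ) : A := (exists_upto p m h).choose h

lemma aseq_ghost (h : ℕ) : gw p (aseq p m) h = tgt p m h := by
  have hag : ∀ i ≤ h, aseq p m i = (exists_upto p m h).choose i := by
    intro i hi
    exact upto_unique p m _ _ i (fun h' hh' => (exists_upto p m i).choose_spec h' hh')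
      (fun h' hh' => (exists_upto p m h).choose_spec h' (le_trans hh' hi)) i le_rfl
  rw [gw_congr p _ _ h hag]
  exact (exists_upto p m h).choose_spec h le_rfl

lemma aseq_modp (h : ℕ) : (p : A) ∣ aseq p m h - xc h ^ p := by
  induction h using Nat.strong_induction_on with
  | _ h ih =>
    have hg := aseq_ghost p m h
    -- claim 1
    have claim1 : (p : A) ^ (h + 1) ∣
        tgt p m h - ∑ i ∈ range (h + 1), (p : A) ^ i * (xc i ^ p) ^ p ^ (h - i) := by
      by_cases hm : h ≤ m
      · rw [tgt, if_pos hm]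
        have hPhi : Phi p (gw p xc h) =
            ∑ i ∈ range (h + 1), (p : A) ^ i * (Phi p (xc i)) ^ p ^ (h - i) := by
          rw [gw, map_sum]
          exact Finset.sum_congr rfl fun i _ => by rw [map_mul, map_pow, map_pow, map_natCast]
        rw [hPhi, ← Finset.sum_sub_distrib]
        refine Finset.dvd_sum fun i hi => ?_
        rw [Finset.mem_range] at hi
        have h1 : (p : A) ∣ Phi p (xc i) - xc i ^ p := ⟨dA p (xc i), dA_spec p (xc i)⟩
        have h2 := dvd_sub_pow_of_dvd_sub h1 (h - i)
        push_cast at h2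
        rw [← mul_sub]
        have h4 : (p : A) ^ (h + 1) ∣ (p : A) ^ i * ((p : A) ^ (h - i + 1)) := by
          rw [← pow_add]
          exact pow_dvd_pow _ (by omega)
        exact dvd_trans h4 (mul_dvd_mul_left _ h2)
      · rw [tgt, if_neg hm]
        have hsp : gw p xc (h + 1) =
            (∑ i ∈ range (h + 1), (p : A) ^ i * (xc i ^ p) ^ p ^ (h - i))
            + (p : A) ^ (h + 1) * xc (h + 1) ^ p ^ (h + 1 - (h + 1)) := by
          rw [gw, Finset.sum_range_succ]
          congr 1
          refine Finset.sum_congr rfl fun i hi => ?_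
          rw [Finset.mem_range] at hi
          congr 1
          rw [← pow_mul]
          congr 1
          rw [← pow_succ']
          congr 1
          omega
        rw [hsp]
        rw [add_sub_cancel_left]
        exact Dvd.intro _ rfl
    -- claim 2
    have claim2 : (p : A) ^ (h + 1) ∣
        ∑ i ∈ range h, ((p : A) ^ i * aseq p m i ^ p ^ (h - i)
          - (p : A) ^ i * (xc i ^ p) ^ p ^ (h - i)) := by
      refine Finset.dvd_sum fun i hi => ?_
      rw [Finset.mem_range] at hi
      have h2 := dvd_sub_pow_of_dvd_sub (ih i hi) (h - i)
      push_cast at h2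
      rw [← mul_sub]
      have h4 : (p : A) ^ (h + 1) ∣ (p : A) ^ i * ((p : A) ^ (h - i + 1)) := by
        rw [← pow_add]
        exact pow_dvd_pow _ (by omega)
      exact dvd_trans h4 (mul_dvd_mul_left _ h2)
    -- combine
    have hsplit : (p : A) ^ h * (aseq p m h - xc h ^ p) =
        (tgt p m h - ∑ i ∈ range (h + 1), (p : A) ^ i * (xc i ^ p) ^ p ^ (h - i))
        - ∑ i ∈ range h, ((p : A) ^ i * aseq p m i ^ p ^ (h - i)
            - (p : A) ^ i * (xc i ^ p) ^ p ^ (h - i)) := by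
      rw [← hg, gw, Finset.sum_range_succ, Finset.sum_range_succ, Finset.sum_sub_distrib]
      rw [Nat.sub_self, pow_zero, pow_one, pow_one]
      ring
    have hdvd : (p : A) ^ (h + 1) ∣ (p : A) ^ h * (aseq p m h - xc h ^ p) := by
      rw [hsplit]
      exact dvd_sub claim1 claim2
    obtain ⟨c, hc⟩ := hdvd
    refine ⟨c, pcancel p (k := h) ?_⟩
    rw [hc]
    ring

end Dwork

section TF

variable (m : ℕ) {S : Type*} [CommRing S] (δS : S → S)

/-- evaluation of universal polynomials at iterated p-derivations of two
coefficient families -/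
noncomputable def ev2 (c : Fin 2 → ℕ → S) : A →+* S :=
  ((aeval fun v : Fin 2 × ℕ × ℕ => δS^[v.2.2] (c v.1 v.2.1)) : A →ₐ[ℤ] S).toRingHom

lemma ev2_X (c : Fin 2 → ℕ → S) (v : Fin 2 × ℕ × ℕ) :
    ev2 δS c (X v) = δS^[v.2.2] (c v.1 v.2.1) := by
  simp [ev2]

lemma ringHom_ext_X {T : Type*} [CommRing T] (f g : A →+* T)
    (h : ∀ v, f (X v) = g (X v)) : f = g := by
  apply MvPolynomial.ringHom_ext _ h
  intro r
  exact RingHom.congr_fun (RingHom.ext_int (f.comp C) (g.comp C)) r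

lemma aeval_pair_natural {S' T : Type*} [CommRing S'] [CommRing T] (f : S' →+* T)
    (Q : MvPolynomial (Fin 2) ℤ) (a b : S') :
    f (aeval ![a, b] Q) = aeval ![f a, f b] Q := by
  rw [map_aeval]
  have h1 : f.comp (algebraMap ℤ S') = algebraMap ℤ T := RingHom.ext_int _ _
  have h2 : (fun i => f (![a, b] i)) = ![f a, f b] := by
    funext i; fin_cases i <;> simp
  rw [h1, h2]
  rfl

variable (hδS : IsPDeriv p Cp δS)

include hCp hδS in
lemma ev2_comp_Phi (c : Fin 2 → ℕ → S) :
    (ev2 δS c).comp (Phi p) = (phiHom p Cp hCp δS hδS).comp (ev2 δS c) := by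
  apply ringHom_ext_X
  intro v
  rw [RingHom.comp_apply, RingHom.comp_apply, Phi_X, map_add, map_pow, map_mul, map_natCast,
    ev2_X, ev2_X, phiHom_apply]
  show _ + _ * δS^[v.2.2 + 1] _ = _
  rw [Function.iterate_succ_apply']
  rfl

/-- the shifted lateral Frobenius, as a bare function -/
noncomputable def tF (x : WittVector p S) : WittVector p S :=
  WittVector.mk p fun h => ev2 δS (fun _ => x.coeff) (aseq p m h)

lemma ghost_tF (k : ℕ) (x : WittVector p S) :
    ghostComponent k (tF p m δS x) = ev2 δS (fun _ => x.coeff) (tgt p m k) := by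
  rw [ghostComponent_apply, aeval_wittPolynomial, ← aseq_ghost p m k, gw, map_sum]
  refine Finset.sum_congr rfl fun i _ => ?_
  rw [map_mul, map_pow, map_pow, map_natCast]
  rfl

lemma ev2_gw_xc (x : WittVector p S) (k : ℕ) :
    ev2 δS (fun _ => x.coeff) (gw p xc k) = ghostComponent k x := by
  rw [gw, map_sum, ghostComponent_apply, aeval_wittPolynomial]
  refine Finset.sum_congr rfl fun i _ => ?_
  rw [map_mul, map_pow, map_pow, map_natCast]
  congr 1
  simp [ev2, xc]

include hCp hδS in
lemma ghost_tF_le {k : ℕ} (hk : k ≤ m) (x : WittVector p S) :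
    ghostComponent k (tF p m δS x) =
      phiHom p Cp hCp δS hδS (ghostComponent k x) := by
  rw [ghost_tF, tgt, if_pos hk]
  have h := RingHom.congr_fun (ev2_comp_Phi p Cp hCp δS hδS (fun _ => x.coeff)) (gw p xc k)
  rw [RingHom.comp_apply, RingHom.comp_apply] at h
  rw [h, ev2_gw_xc]

lemma ghost_tF_gt {k : ℕ} (hk : m + 1 ≤ k) (x : WittVector p S) :
    ghostComponent k (tF p m δS x) = ghostComponent (k + 1) x := by
  rw [ghost_tF, tgt, if_neg (by omega), ev2_gw_xc]

lemma tF_coeff_modp (h : ℕ) (x : WittVector p S) :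
    (tF p m δS x).coeff h - x.coeff h ^ p ∈ Ideal.span {(p : S)} := by
  rw [Ideal.mem_span_singleton]
  obtain ⟨c, hc⟩ := aseq_modp p m h
  refine ⟨ev2 δS (fun _ => x.coeff) c, ?_⟩
  have h1 : (tF p m δS x).coeff h = ev2 δS (fun _ => x.coeff) (aseq p m h) := rfl
  have h2 : aseq p m h = xc h ^ p + (p : A) * c := by linear_combination hc
  rw [h1, h2, map_add, map_mul, map_pow, map_natCast]
  have h3 : ev2 δS (fun _ => x.coeff) (xc h) = x.coeff h := by simp [ev2, xc]
  rw [h3]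
  congr 1
  ring

variable {T : Type*} [CommRing T] (δT : T → T) (f : S →+* T) (hf : ∀ s, f (δS s) = δT (f s))

include hf in
lemma f_iterate (j : ℕ) (s : S) : f (δS^[j] s) = δT^[j] (f s) := by
  induction j with
  | zero => rfl
  | succ j ih => rw [Function.iterate_succ_apply', Function.iterate_succ_apply', hf, ih]

include hf in
lemma ev2_natural (c : Fin 2 → ℕ → S) :
    f.comp (ev2 δS c) = ev2 δT (fun s i => f (c s i)) := by
  apply ringHom_ext_X
  intro v
  rw [RingHom.comp_apply, ev2_X, ev2_X]
  exact f_iterate δS δT f hf _ _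

include hf in
lemma tF_natural (x : WittVector p S) :
    WittVector.map f (tF p m δS x) = tF p m δT (WittVector.map f x) := by
  apply WittVector.ext
  intro n
  rw [WittVector.map_coeff]
  have h1 : (tF p m δT (WittVector.map f x)).coeff n
      = ev2 δT (fun _ => (WittVector.map f x).coeff) (aseq p m n) := rfl
  have h2 : (tF p m δS x).coeff n = ev2 δS (fun _ => x.coeff) (aseq p m n) := rfl
  rw [h1, h2]
  have h3 := RingHom.congr_fun (ev2_natural δS δT f hf (fun _ => x.coeff)) (aseq p m n)
  rw [RingHom.comp_apply] at h3
  rw [h3]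
  congr 1

end TF

lemma ghost_inj (u v : WittVector p A)
    (h : ∀ k, ghostComponent k u = ghostComponent k v) : u = v := by
  apply WittVector.ext
  intro n
  induction n using Nat.strong_induction_on with
  | _ n ih =>
    have h1 := h n
    rw [ghostComponent_apply, ghostComponent_apply, aeval_wittPolynomial,
      aeval_wittPolynomial, Finset.sum_range_succ, Finset.sum_range_succ] at h1
    have h2 : ∑ i ∈ range n, (p : A) ^ i * u.coeff i ^ p ^ (n - i)
        = ∑ i ∈ range n, (p : A) ^ i * v.coeff i ^ p ^ (n - i) :=
      Finset.sum_congr rfl fun i hi => by rw [ih i (Finset.mem_range.1 hi)]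
    rw [h2, Nat.sub_self, pow_zero, pow_one, pow_one] at h1
    exact pcancel p (by linear_combination h1)

section Comm

variable {R : Type*} [CommRing R] (δR : R → R)

include hCp in
lemma pd_succ (hδR : IsPDeriv p Cp δR) (x : R) :
    δR (x + 1) = δR x + aeval ![x, (1 : R)] Cp := by
  rw [hδR.2.1 x 1, hδR.1, add_zero]

include hCp in
lemma pd_neg_one (hδR : IsPDeriv p Cp δR) :
    δR (-1 : R) = -aeval ![(1 : R), -1] Cp := by
  rw [pd_neg p Cp hCp δR hδR 1, hδR.1, neg_zero, zero_sub]

variable (hδR : IsPDeriv p Cp δR)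

include hCp hδR in
lemma comm_int (f : A →+* R) : ∀ r : ℤ, f (dA p ((r : ℤ) : A)) = δR ((r : R)) := by
  have hA := isPDeriv_dA p Cp hCp
  intro r
  induction r using Int.induction_on with
  | zero =>
    rw [Int.cast_zero, Int.cast_zero, pd_zero p Cp hCp (dA p) hA,
      pd_zero p Cp hCp δR hδR, map_zero]
  | succ i ih =>
    rw [show (((i : ℤ) + 1 : ℤ) : A) = (((i : ℤ) : ℤ) : A) + 1 by push_cast; ring]
    rw [pd_succ p Cp hCp (dA p) hA, map_add, ih, aeval_pair_natural, map_one, map_intCast]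
    rw [show (((i : ℤ) + 1 : ℤ) : R) = (((i : ℤ) : ℤ) : R) + 1 by push_cast; ring]
    rw [pd_succ p Cp hCp δR hδR]
  | pred i ih =>
    have hA21 := hA.2.1 (((-(i : ℤ) : ℤ) : A)) (-1)
    rw [show ((-(i : ℤ) - 1 : ℤ) : A) = (((-(i : ℤ) : ℤ)) : A) + (-1) by push_cast; ring]
    rw [hA21, map_add, map_add, ih, aeval_pair_natural, map_intCast]
    have hm1 : f (dA p (-1 : A)) = δR (-1 : R) := by
      rw [pd_neg_one p Cp hCp (dA p) hA, map_neg, aeval_pair_natural, map_one, map_neg, map_one,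
        ← pd_neg_one p Cp hCp δR hδR]
    rw [hm1, map_neg, map_one]
    rw [show ((-(i : ℤ) - 1 : ℤ) : R) = (((-(i : ℤ) : ℤ)) : R) + (-1) by push_cast; ring]
    rw [hδR.2.1 (((-(i : ℤ) : ℤ)) : R) (-1)]

include hCp hδR in
lemma comm_dA (f : A →+* R) (hgen : ∀ v, f (X (nx v)) = δR (f (X v))) (a : A) :
    f (dA p a) = δR (f a) := by
  have hA := isPDeriv_dA p Cp hCp
  have hmem : a ∈ Algebra.adjoin ℤ (Set.range (X : (Fin 2 × ℕ × ℕ) → A)) := by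
    rw [MvPolynomial.adjoin_range_X]; trivial
  induction hmem using Algebra.adjoin_induction with
  | mem x hx =>
    obtain ⟨v, rfl⟩ := hx
    rw [dA_X]
    exact hgen v
  | algebraMap r =>
    rw [show (algebraMap ℤ A) r = ((r : ℤ) : A) by simp]
    rw [comm_int p Cp hCp δR hδR f r]
    congr 1
    simp
  | add x y hx hy ihx ihy =>
    rw [hA.2.1 x y, map_add, map_add, ihx, ihy, aeval_pair_natural, map_add f, hδR.2.1]
  | mul x y hx hy ihx ihy =>
    rw [hA.2.2 x y, map_add, map_add, map_mul, map_mul, map_mul, map_mul, map_pow, map_pow,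
      map_natCast, ihx, ihy, map_mul f, hδR.2.2]

end Comm

include hCp in
lemma tF_add_A (m : ℕ) (u v : WittVector p A) :
    tF p m (dA p) (u + v) = tF p m (dA p) u + tF p m (dA p) v := by
  have hA := isPDeriv_dA p Cp hCp
  apply ghost_inj
  intro k
  by_cases hk : k ≤ m
  · simp only [map_add, ghost_tF_le p Cp hCp m (dA p) hA hk]
  · simp only [map_add, ghost_tF_gt p m (dA p) (by omega : m + 1 ≤ k)]

include hCp in
lemma tF_mul_A (m : ℕ) (u v : WittVector p A) :
    tF p m (dA p) (u * v) = tF p m (dA p) u * tF p m (dA p) v := by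
  have hA := isPDeriv_dA p Cp hCp
  apply ghost_inj
  intro k
  by_cases hk : k ≤ m
  · simp only [map_mul, ghost_tF_le p Cp hCp m (dA p) hA hk]
  · simp only [map_mul, ghost_tF_gt p m (dA p) (by omega : m + 1 ≤ k)]

include hCp in
lemma tF_one_A (m : ℕ) : tF p m (dA p) (1 : WittVector p A) = 1 := by
  have hA := isPDeriv_dA p Cp hCp
  apply ghost_inj
  intro k
  by_cases hk : k ≤ m
  · simp only [map_one, ghost_tF_le p Cp hCp m (dA p) hA hk]
  · simp only [map_one, ghost_tF_gt p m (dA p) (by omega : m + 1 ≤ k)]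

end LatFrobAux

open LatFrobAux

/-- Existence of the `m`-shifted lateral Frobenius as a ring homomorphism on
`p`-typical Witt vectors; it agrees with `φ` on the first `m+1` ghost components,
shifts the later ghost components, and its Witt coefficients are congruent to
`p`-th powers of the original ones modulo `p`. -/
theorem exists_shifted_lateral_frobenius
    (p : ℕ) [hp : Fact p.Prime] (R : Type*) [CommRing R]
    (Cp : MvPolynomial (Fin 2) ℤ)
    (hCp : (p : MvPolynomial (Fin 2) ℤ) * Cp =
      X 0 ^ p + X 1 ^ p - (X 0 + X 1) ^ p)
    (δ : R → R) (hδ : IsPDeriv p Cp δ)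
    (φ : R → R) (hφ : ∀ x : R, φ x = x ^ p + (p : R) * δ x)
    (m : ℕ) :
    ∃ tF : WittVector p R →+* WittVector p R,
      (∀ k ≤ m, ∀ x : WittVector p R,
        WittVector.ghostComponent k (tF x) = φ (WittVector.ghostComponent k x)) ∧
      (∀ k, m + 1 ≤ k → ∀ x : WittVector p R,
        WittVector.ghostComponent k (tF x) = WittVector.ghostComponent (k + 1) x) ∧
      (∀ h : ℕ, ∀ x : WittVector p R,
        (tF x).coeff h - x.coeff h ^ p ∈ Ideal.span {(p : R)}) := by
  classical
  have transfer : ∀ x y : WittVector p R, ∃ F : LatFrobAux.A →+* R,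
      (∀ a, F (dA p a) = δ (F a)) ∧
      WittVector.map F (WittVector.mk p fun i => X ((0 : Fin 2), i, 0)) = x ∧
      WittVector.map F (WittVector.mk p fun i => X ((1 : Fin 2), i, 0)) = y := by
    intro x y
    refine ⟨ev2 δ ![x.coeff, y.coeff], ?_, ?_, ?_⟩
    · apply comm_dA p Cp hCp δ hδ
      intro v
      rw [ev2_X, ev2_X]
      exact Function.iterate_succ_apply' δ v.2.2 _
    · apply WittVector.ext
      intro n
      rw [WittVector.map_coeff]
      show ev2 δ ![x.coeff, y.coeff] (X ((0 : Fin 2), n, 0)) = x.coeff n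
      rw [ev2_X]
      simp
    · apply WittVector.ext
      intro n
      rw [WittVector.map_coeff]
      show ev2 δ ![x.coeff, y.coeff] (X ((1 : Fin 2), n, 0)) = y.coeff n
      rw [ev2_X]
      simp
  set u : WittVector p LatFrobAux.A := WittVector.mk p fun i => X ((0 : Fin 2), i, 0) with hu
  set v : WittVector p LatFrobAux.A := WittVector.mk p fun i => X ((1 : Fin 2), i, 0) with hv
  have hadd : ∀ x y : WittVector p R, tF p m δ (x + y) = tF p m δ x + tF p m δ y := by
    intro x y
    obtain ⟨F, hFδ, hU, hV⟩ := transfer x y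
    calc tF p m δ (x + y)
        = tF p m δ (WittVector.map F u + WittVector.map F v) := by rw [hU, hV]
      _ = tF p m δ (WittVector.map F (u + v)) := by rw [map_add]
      _ = WittVector.map F (tF p m (dA p) (u + v)) :=
          (tF_natural p m (dA p) δ F hFδ _).symm
      _ = WittVector.map F (tF p m (dA p) u + tF p m (dA p) v) := by
          rw [tF_add_A p Cp hCp m]
      _ = WittVector.map F (tF p m (dA p) u) + WittVector.map F (tF p m (dA p) v) := by
          rw [map_add]
      _ = tF p m δ (WittVector.map F u) + tF p m δ (WittVector.map F v) := by
          rw [tF_natural p m (dA p) δ F hFδ, tF_natural p m (dA p) δ F hFδ]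
      _ = tF p m δ x + tF p m δ y := by rw [hU, hV]
  have hmul : ∀ x y : WittVector p R, tF p m δ (x * y) = tF p m δ x * tF p m δ y := by
    intro x y
    obtain ⟨F, hFδ, hU, hV⟩ := transfer x y
    calc tF p m δ (x * y)
        = tF p m δ (WittVector.map F u * WittVector.map F v) := by rw [hU, hV]
      _ = tF p m δ (WittVector.map F (u * v)) := by rw [map_mul]
      _ = WittVector.map F (tF p m (dA p) (u * v)) :=
          (tF_natural p m (dA p) δ F hFδ _).symm
      _ = WittVector.map F (tF p m (dA p) u * tF p m (dA p) v) := by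
          rw [tF_mul_A p Cp hCp m]
      _ = WittVector.map F (tF p m (dA p) u) * WittVector.map F (tF p m (dA p) v) := by
          rw [map_mul]
      _ = tF p m δ (WittVector.map F u) * tF p m δ (WittVector.map F v) := by
          rw [tF_natural p m (dA p) δ F hFδ, tF_natural p m (dA p) δ F hFδ]
      _ = tF p m δ x * tF p m δ y := by rw [hU, hV]
  have hone : tF p m δ (1 : WittVector p R) = 1 := by
    obtain ⟨F, hFδ, -, -⟩ := transfer 1 1
    calc tF p m δ (1 : WittVector p R)
        = tF p m δ (WittVector.map F (1 : WittVector p LatFrobAux.A)) := by rw [map_one]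
      _ = WittVector.map F (tF p m (dA p) 1) := (tF_natural p m (dA p) δ F hFδ _).symm
      _ = WittVector.map F 1 := by rw [tF_one_A p Cp hCp m]
      _ = 1 := map_one _
  refine ⟨RingHom.mk' ⟨⟨tF p m δ, hone⟩, hmul⟩ hadd, ?_, ?_, ?_⟩
  · intro k hk x
    show WittVector.ghostComponent k (tF p m δ x) = φ (WittVector.ghostComponent k x)
    rw [ghost_tF_le p Cp hCp m δ hδ hk x, phiHom_apply, hφ]
  · intro k hk x
    exact ghost_tF_gt p m δ hk x
  · intro h x
    exact tF_coeff_modp p m δ h x
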